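/- Let Ā be an m×m complex matrix with operator norm γ = ‖Ā‖ < 1, let B̄ be an m×p, C a q×m, and D a q×p complex matrix, let (u_k)_{k=0}^{L-1} be vectors in ℂ^p with ‖u_k‖ ≤ U for all k, and let N be a natural number. Let y_ℓ = ∑_{k=0}^{ℓ} C Ā^{ℓ-k} B̄ u_k + D u_ℓ be the exact output and ŷ_ℓ = ∑_{k=max(0, ℓ-2^{N+1}+1)}^{ℓ} C Ā^{ℓ-k} B̄ u_k + D u_ℓ the output of the N+1-stage cascade. Then for every 0 ≤ ℓ ≤ L-1, ‖y_ℓ - ŷ_ℓ‖ ≤ (γ^{2^{N+1}} / (1 - γ)) · ‖C‖ · ‖B̄‖ · U. -/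

import Mathlib

open scoped Matrix.Norms.L2Operator

lemma toEuclideanLin_le_opNorm {a b : ℕ} (A : Matrix (Fin a) (Fin b) ℂ)
    (x : EuclideanSpace ℂ (Fin b)) :
    ‖Matrix.toEuclideanLin A x‖ ≤ ‖A‖ * ‖x‖ :=
  ((Matrix.toEuclideanLin.trans LinearMap.toContinuousLinearMap) A).le_opNorm x

/-- Error bound for the cascade algorithm in time domain: if `γ = ‖Ā‖ < 1` (operator
norm), the inputs satisfy `‖u_k‖ ≤ U` (Euclidean norm), `y_ℓ = ∑_{k=0}^{ℓ} C Ā^(ℓ-k) B̄ u_k + D u_ℓ`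
is the exact LTI output and
`ŷ_ℓ = ∑_{k=max(0,ℓ-2^(N+1)+1)}^{ℓ} C Ā^(ℓ-k) B̄ u_k + D u_ℓ` the output of the
`N+1`-stage cascade, then `‖y_ℓ - ŷ_ℓ‖ ≤ (γ^(2^(N+1))/(1-γ)) ⬝ ‖C‖ ⬝ ‖B̄‖ ⬝ U`
for every `0 ≤ ℓ ≤ L-1`. -/
theorem cascade_output_error_bound {m p q L : ℕ}
    (Abar : Matrix (Fin m) (Fin m) ℂ) (Bbar : Matrix (Fin m) (Fin p) ℂ)
    (C : Matrix (Fin q) (Fin m) ℂ) (D : Matrix (Fin q) (Fin p) ℂ)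
    (γ : ℝ) (hγ : γ = ‖Abar‖) (hγ1 : γ < 1) (N : ℕ)
    (u : ℕ → EuclideanSpace ℂ (Fin p)) (U : ℝ) (hU : ∀ k : ℕ, k < L → ‖u k‖ ≤ U)
    (y yhat : ℕ → EuclideanSpace ℂ (Fin q))
    (hy : ∀ ℓ : ℕ, ℓ < L → y ℓ = ∑ k ∈ Finset.range (ℓ + 1),
        Matrix.toEuclideanLin (C * Abar ^ (ℓ - k) * Bbar) (u k)
          + Matrix.toEuclideanLin D (u ℓ))
    (hyhat : ∀ ℓ : ℕ, ℓ < L → yhat ℓ = ∑ k ∈ Finset.Icc (ℓ + 1 - 2 ^ (N + 1)) ℓ,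
        Matrix.toEuclideanLin (C * Abar ^ (ℓ - k) * Bbar) (u k)
          + Matrix.toEuclideanLin D (u ℓ)) :
    ∀ ℓ : ℕ, ℓ < L →
      ‖y ℓ - yhat ℓ‖ ≤ γ ^ 2 ^ (N + 1) / (1 - γ) * ‖C‖ * ‖Bbar‖ * U := by
  have hSpos : 0 < 2 ^ (N + 1) := Nat.pow_pos (by norm_num)
  intro ℓ hℓ
  have hγ0 : 0 ≤ γ := hγ ▸ norm_nonneg _
  have h1γ : 0 < 1 - γ := by linarith
  have hU0 : 0 ≤ U := le_trans (norm_nonneg _) (hU ℓ hℓ)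
  rw [hy ℓ hℓ, hyhat ℓ hℓ]
  generalize hSdef : 2 ^ (N + 1) = S at hSpos ⊢
  set a := ℓ + 1 - S with ha
  have hsub : Finset.Icc a ℓ ⊆ Finset.range (ℓ + 1) := by
    intro k hk
    rw [Finset.mem_Icc] at hk
    rw [Finset.mem_range]
    omega
  have hdiff : Finset.range (ℓ + 1) \ Finset.Icc a ℓ = Finset.range a := by
    ext k
    simp only [Finset.mem_sdiff, Finset.mem_Icc, Finset.mem_range, ha]
    omega
  have hdiffsum :
      (∑ k ∈ Finset.range (ℓ + 1), Matrix.toEuclideanLin (C * Abar ^ (ℓ - k) * Bbar) (u k)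
          + Matrix.toEuclideanLin D (u ℓ))
        - (∑ k ∈ Finset.Icc a ℓ, Matrix.toEuclideanLin (C * Abar ^ (ℓ - k) * Bbar) (u k)
          + Matrix.toEuclideanLin D (u ℓ))
      = ∑ k ∈ Finset.range a, Matrix.toEuclideanLin (C * Abar ^ (ℓ - k) * Bbar) (u k) := by
    rw [← hdiff, Finset.sum_sdiff_eq_sub hsub]
    abel
  rw [hdiffsum]
  have hterm : ∀ k ∈ Finset.range a,
      ‖Matrix.toEuclideanLin (C * Abar ^ (ℓ - k) * Bbar) (u k)‖
        ≤ ‖C‖ * ‖Bbar‖ * U * γ ^ (ℓ - k) := by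
    intro k hk
    rw [Finset.mem_range, ha] at hk
    have hkℓ : k < L := by omega
    have h1 := toEuclideanLin_le_opNorm (C * Abar ^ (ℓ - k) * Bbar) (u k)
    have h2 : ‖C * Abar ^ (ℓ - k) * Bbar‖ ≤ ‖C‖ * γ ^ (ℓ - k) * ‖Bbar‖ := by
      calc ‖C * Abar ^ (ℓ - k) * Bbar‖ ≤ ‖C * Abar ^ (ℓ - k)‖ * ‖Bbar‖ :=
            Matrix.l2_opNorm_mul _ _
        _ ≤ ‖C‖ * ‖Abar ^ (ℓ - k)‖ * ‖Bbar‖ :=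
            mul_le_mul_of_nonneg_right (Matrix.l2_opNorm_mul _ _) (norm_nonneg _)
        _ ≤ ‖C‖ * γ ^ (ℓ - k) * ‖Bbar‖ := by
            have hpow : ‖Abar ^ (ℓ - k)‖ ≤ γ ^ (ℓ - k) := by
              have hn : 0 < ℓ - k := by omega
              simpa [hγ] using norm_pow_le' Abar hn
            exact mul_le_mul_of_nonneg_right
              (mul_le_mul_of_nonneg_left hpow (norm_nonneg _)) (norm_nonneg _)
    calc ‖Matrix.toEuclideanLin (C * Abar ^ (ℓ - k) * Bbar) (u k)‖
        ≤ ‖C * Abar ^ (ℓ - k) * Bbar‖ * ‖u k‖ := h1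
      _ ≤ (‖C‖ * γ ^ (ℓ - k) * ‖Bbar‖) * U := by
          apply mul_le_mul h2 (hU k hkℓ) (norm_nonneg _)
          positivity
      _ = ‖C‖ * ‖Bbar‖ * U * γ ^ (ℓ - k) := by ring
  have hsum : ‖∑ k ∈ Finset.range a, Matrix.toEuclideanLin (C * Abar ^ (ℓ - k) * Bbar) (u k)‖
      ≤ ∑ k ∈ Finset.range a, ‖C‖ * ‖Bbar‖ * U * γ ^ (ℓ - k) :=
    (norm_sum_le _ _).trans (Finset.sum_le_sum hterm)
  refine hsum.trans ?_
  rw [← Finset.mul_sum]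
  have hgeom : ∑ k ∈ Finset.range a, γ ^ (ℓ - k) ≤ γ ^ S / (1 - γ) := by
    rcases Nat.eq_zero_or_pos a with h0 | hpos
    · rw [h0]
      simp only [Finset.range_zero, Finset.sum_empty]
      positivity
    · have haS : a + S = ℓ + 1 := by omega
      have hrefl : ∑ k ∈ Finset.range a, γ ^ (ℓ - k)
          = ∑ k ∈ Finset.range a, γ ^ (S + k) := by
        rw [← Finset.sum_range_reflect (fun k => γ ^ (ℓ - k)) a]
        refine Finset.sum_congr rfl fun k hk => ?_
        rw [Finset.mem_range] at hk
        congr 1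
        omega
      have hfac : ∑ k ∈ Finset.range a, γ ^ (S + k)
          = γ ^ S * ∑ k ∈ Finset.range a, γ ^ k := by
        rw [Finset.mul_sum]
        exact Finset.sum_congr rfl fun k _ => pow_add γ S k
      have hg : ∑ k ∈ Finset.range a, γ ^ k ≤ 1 / (1 - γ) := by
        rw [geom_sum_eq (ne_of_lt hγ1) a]
        have he : (γ ^ a - 1) / (γ - 1) = (1 - γ ^ a) / (1 - γ) := by
          rw [div_eq_div_iff (by linarith) (by linarith)]
          ring
        rw [he]
        have hle : 1 - γ ^ a ≤ 1 := by
          have := pow_nonneg hγ0 a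
          linarith
        gcongr
      rw [hrefl, hfac]
      calc γ ^ S * ∑ k ∈ Finset.range a, γ ^ k ≤ γ ^ S * (1 / (1 - γ)) :=
            mul_le_mul_of_nonneg_left hg (by positivity)
        _ = γ ^ S / (1 - γ) := by ring
  calc ‖C‖ * ‖Bbar‖ * U * ∑ k ∈ Finset.range a, γ ^ (ℓ - k)
      ≤ ‖C‖ * ‖Bbar‖ * U * (γ ^ S / (1 - γ)) :=
        mul_le_mul_of_nonneg_left hgeom (by positivity)
    _ = γ ^ S / (1 - γ) * ‖C‖ * ‖Bbar‖ * U := by ring
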